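/- arXiv:1904.12209 — 2 statements merged into one kernel-verified Lean document; each statement's English description precedes it below -/
import Mathlib

section
/- Let Γ ⊂ ℤ² be a finite nonempty convex domain. The map H ↦ [−Δ_Γ H] induces a group isomorphism from the quotient group ℋ_G^Γ = {H ∈ ℋ_ℚ^Γ : Δ_Γ H takes values in ℤ} / ℋ_ℤ^Γ onto the sandpile group G_Γ. -/
/-- Two vertices of `ℤ²` are adjacent iff their Euclidean distance is `1`. -/
def adj (u v : ℤ × ℤ) : Prop := (u.1 - v.1) ^ 2 + (u.2 - v.2) ^ 2 = 1

instance : DecidableRel adj := fun u v => by unfold adj; infer_instance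

/-- The reduced Laplacian of a finite domain `Γ ⊂ ℤ²`. -/
def lap {R : Type*} [CommRing R] (Γ : Finset (ℤ × ℤ)) (f : ↥Γ → R) : ↥Γ → R :=
  fun v => (∑ w ∈ Γ.attach.filter (fun w => adj w.1 v.1), f w) - 4 * f v

lemma lap_add {R : Type*} [CommRing R] (Γ : Finset (ℤ × ℤ)) (f g : ↥Γ → R) :
    lap Γ (f + g) = lap Γ f + lap Γ g := by
  funext v; simp [lap, Finset.sum_add_distrib]; ring

lemma lap_neg {R : Type*} [CommRing R] (Γ : Finset (ℤ × ℤ)) (f : ↥Γ → R) :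
    lap Γ (-f) = -(lap Γ f) := by
  funext v; simp [lap]; ring

lemma lap_smul {R : Type*} [CommRing R] (Γ : Finset (ℤ × ℤ)) (c : R) (f : ↥Γ → R) :
    lap Γ (c • f) = c • lap Γ f := by
  funext v
  simp only [lap, Pi.smul_apply, smul_eq_mul, mul_sub, Finset.mul_sum]
  ring

lemma lap_zero {R : Type*} [CommRing R] (Γ : Finset (ℤ × ℤ)) :
    lap Γ (0 : ↥Γ → R) = 0 := by
  funext v; simp [lap]

/-- The boundary `∂Γ`: vertices of `Γ` adjacent to some vertex of `ℤ² \ Γ`. -/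
noncomputable def boundary (Γ : Finset (ℤ × ℤ)) : Finset (ℤ × ℤ) :=
  @Finset.filter _ (fun v => ∃ w : ℤ × ℤ, w ∉ Γ ∧ adj w v) (Classical.decPred _) Γ

lemma boundary_subset (Γ : Finset (ℤ × ℤ)) : boundary Γ ⊆ Γ :=
  @Finset.filter_subset _ (fun v => ∃ w : ℤ × ℤ, w ∉ Γ ∧ adj w v) (Classical.decPred _) Γ

/-- A function on `Γ` is harmonic if its Laplacian vanishes on the interior `Γ \ ∂Γ`. -/
def Harmonic {R : Type*} [CommRing R] (Γ : Finset (ℤ × ℤ)) (f : ↥Γ → R) : Prop :=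
  ∀ v : ↥Γ, (v : ℤ × ℤ) ∉ boundary Γ → lap Γ f v = 0

/-- `Γ ⊂ ℤ²` is a convex domain if it is the set of lattice points of a
convex open subset of `ℝ²`. -/
def IsConvexDomain (Γ : Finset (ℤ × ℤ)) : Prop :=
  ∃ P : Set (ℝ × ℝ), Convex ℝ P ∧ IsOpen P ∧
    ∀ v : ℤ × ℤ, v ∈ Γ ↔ ((v.1 : ℝ), (v.2 : ℝ)) ∈ P

/-- The reduced Laplacian as an additive group homomorphism on `ℤ^Γ`. -/
def lapHom (Γ : Finset (ℤ × ℤ)) : (↥Γ → ℤ) →+ (↥Γ → ℤ) where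
  toFun := lap Γ
  map_zero' := lap_zero Γ
  map_add' := lap_add Γ

/-- The sandpile group `G_Γ = ℤ^Γ / Δ_Γ(ℤ^Γ)`. -/
def SandpileGroup (Γ : Finset (ℤ × ℤ)) : Type :=
  (↥Γ → ℤ) ⧸ (lapHom Γ).range

instance (Γ : Finset (ℤ × ℤ)) : AddCommGroup (SandpileGroup Γ) :=
  inferInstanceAs (AddCommGroup ((↥Γ → ℤ) ⧸ (lapHom Γ).range))

/-- The canonical projection `ℤ^Γ → G_Γ`. -/
def sandMk (Γ : Finset (ℤ × ℤ)) : (↥Γ → ℤ) →+ SandpileGroup Γ :=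
  QuotientAddGroup.mk' _

/-- The rational-valued harmonic functions on `Γ`, as an additive subgroup of `ℚ^Γ`. -/
def HarmQ (Γ : Finset (ℤ × ℤ)) : AddSubgroup (↥Γ → ℚ) where
  carrier := {f | Harmonic Γ f}
  zero_mem' := fun v _ => by rw [lap_zero]; rfl
  add_mem' := by
    intro a b ha hb v hv
    rw [lap_add]
    simp [ha v hv, hb v hv]
  neg_mem' := by
    intro a ha v hv
    rw [lap_neg]
    simp [ha v hv]

/-- The integer-valued harmonic functions on `Γ`, regarded as an additive
subgroup of `ℚ^Γ`. -/
def HarmZinQ (Γ : Finset (ℤ × ℤ)) : AddSubgroup (↥Γ → ℚ) where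
  carrier := {f | Harmonic Γ f ∧ ∀ v : ↥Γ, ∃ z : ℤ, f v = (z : ℚ)}
  zero_mem' := ⟨(HarmQ Γ).zero_mem, fun v => ⟨0, by simp⟩⟩
  add_mem' := by
    intro a b ha hb
    refine ⟨(HarmQ Γ).add_mem ha.1 hb.1, fun v => ?_⟩
    obtain ⟨z1, h1⟩ := ha.2 v
    obtain ⟨z2, h2⟩ := hb.2 v
    exact ⟨z1 + z2, by simp [h1, h2]⟩
  neg_mem' := by
    intro a ha
    refine ⟨(HarmQ Γ).neg_mem ha.1, fun v => ?_⟩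
    obtain ⟨z, h⟩ := ha.2 v
    exact ⟨-z, by simp [h]⟩

/-- The rational-valued harmonic functions on `Γ` whose Laplacian is
integer-valued, as an additive subgroup of `ℚ^Γ`. -/
def HarmIntLap (Γ : Finset (ℤ × ℤ)) : AddSubgroup (↥Γ → ℚ) where
  carrier := {f | Harmonic Γ f ∧ ∀ v : ↥Γ, ∃ z : ℤ, lap Γ f v = (z : ℚ)}
  zero_mem' := ⟨(HarmQ Γ).zero_mem, fun v => ⟨0, by rw [lap_zero]; simp⟩⟩
  add_mem' := by
    intro a b ha hb
    refine ⟨(HarmQ Γ).add_mem ha.1 hb.1, fun v => ?_⟩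
    obtain ⟨z1, h1⟩ := ha.2 v
    obtain ⟨z2, h2⟩ := hb.2 v
    exact ⟨z1 + z2, by rw [lap_add]; simp [h1, h2]⟩
  neg_mem' := by
    intro a ha
    refine ⟨(HarmQ Γ).neg_mem ha.1, fun v => ?_⟩
    obtain ⟨z, h⟩ := ha.2 v
    exact ⟨-z, by rw [lap_neg]; simp [h]⟩

/-- The integer-valued harmonic functions on `Γ`, as a `ℤ`-submodule of `ℤ^Γ`. -/
def HarmZ (Γ : Finset (ℤ × ℤ)) : Submodule ℤ (↥Γ → ℤ) where
  carrier := {f | Harmonic Γ f}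
  zero_mem' := fun v _ => by rw [lap_zero]; rfl
  add_mem' := by
    intro a b ha hb v hv
    rw [lap_add]
    simp [ha v hv, hb v hv]
  smul_mem' := by
    intro c a ha v hv
    rw [lap_smul]
    simp [ha v hv]

/-- The rational-valued harmonic functions on `Γ`, as a `ℚ`-submodule of `ℚ^Γ`. -/
def HarmQmod (Γ : Finset (ℤ × ℤ)) : Submodule ℚ (↥Γ → ℚ) where
  carrier := {f | Harmonic Γ f}
  zero_mem' := fun v _ => by rw [lap_zero]; rfl
  add_mem' := by
    intro a b ha hb v hv
    rw [lap_add]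
    simp [ha v hv, hb v hv]
  smul_mem' := by
    intro c a ha v hv
    rw [lap_smul]
    simp [ha v hv]

/-! ### Auxiliary lemmas -/

lemma adj_iff (w v : ℤ × ℤ) :
    adj w v ↔ w = (v.1 + 1, v.2) ∨ w = (v.1 - 1, v.2) ∨ w = (v.1, v.2 + 1) ∨ w = (v.1, v.2 - 1) := by
  unfold adj
  constructor
  · intro h
    have h1 : w.1 - v.1 ≤ 1 := by nlinarith [sq_nonneg (w.2 - v.2)]
    have h2 : -1 ≤ w.1 - v.1 := by nlinarith [sq_nonneg (w.2 - v.2)]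
    have h5 : w.1 - v.1 = 0 ∨ w.1 - v.1 = 1 ∨ w.1 - v.1 = -1 := by omega
    have h3 : w.2 - v.2 ≤ 1 := by nlinarith [sq_nonneg (w.1 - v.1)]
    have h4 : -1 ≤ w.2 - v.2 := by nlinarith [sq_nonneg (w.1 - v.1)]
    have h6 : w.2 - v.2 = 0 ∨ w.2 - v.2 = 1 ∨ w.2 - v.2 = -1 := by omega
    obtain ⟨x, y⟩ := w; obtain ⟨c, d⟩ := v
    simp only [Prod.mk.injEq] at *
    rcases h5 with h5 | h5 | h5 <;> rcases h6 with h6 | h6 | h6 <;>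
      rw [h5, h6] at h <;> norm_num at h <;> omega
  · rintro (rfl | rfl | rfl | rfl) <;> ring

lemma adj_right (v : ℤ × ℤ) : adj (v.1 + 1, v.2) v := by unfold adj; ring

lemma mem_boundary_iff (Γ : Finset (ℤ × ℤ)) (v : ℤ × ℤ) :
    v ∈ boundary Γ ↔ v ∈ Γ ∧ ∃ w, w ∉ Γ ∧ adj w v := by
  unfold boundary
  exact @Finset.mem_filter _ _ (Classical.decPred _) _ _

lemma interior_nbr_mem {Γ : Finset (ℤ × ℤ)} {v : ℤ × ℤ} (hv : v ∈ Γ)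
    (hnb : v ∉ boundary Γ) {w : ℤ × ℤ} (hadj : adj w v) : w ∈ Γ := by
  by_contra hw
  exact hnb ((mem_boundary_iff Γ v).2 ⟨hv, w, hw, hadj⟩)

lemma lap_sub {R : Type*} [CommRing R] (Γ : Finset (ℤ × ℤ)) (f g : ↥Γ → R) :
    lap Γ (f - g) = lap Γ f - lap Γ g := by
  rw [sub_eq_add_neg, lap_add, lap_neg]; ring

lemma lap_sum {R : Type*} [CommRing R] (Γ : Finset (ℤ × ℤ)) {ι : Type*} (s : Finset ι)
    (f : ι → ↥Γ → R) : lap Γ (∑ i ∈ s, f i) = ∑ i ∈ s, lap Γ (f i) := by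
  induction s using Finset.cons_induction with
  | empty => simp [lap_zero]
  | cons a s ha ih => rw [Finset.sum_cons, Finset.sum_cons, lap_add, ih]

lemma lap_cast (Γ : Finset (ℤ × ℤ)) (n : ↥Γ → ℤ) (v : ↥Γ) :
    lap Γ (fun w => ((n w : ℤ) : ℚ)) v = ((lap Γ n v : ℤ) : ℚ) := by
  simp only [lap]
  push_cast
  ring

/-- Cardinality of the set of neighbours of `v` inside `Γ` is at most `4`. -/
lemma card_nbrs_le (Γ : Finset (ℤ × ℤ)) (v : ℤ × ℤ) :
    (Γ.attach.filter (fun w => adj w.1 v)).card ≤ 4 := by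
  have h := Finset.card_le_card_of_injOn (fun w : ↥Γ => (w : ℤ × ℤ))
    (s := Γ.attach.filter (fun w => adj w.1 v))
    (t := {(v.1 + 1, v.2), (v.1 - 1, v.2), (v.1, v.2 + 1), (v.1, v.2 - 1)})
    (by
      intro w hw
      rw [Finset.mem_coe, Finset.mem_filter] at hw
      have := (adj_iff (w : ℤ × ℤ) v).1 hw.2
      simp only [Finset.mem_coe, Finset.mem_insert, Finset.mem_singleton]
      tauto)
    (fun a _ b _ hab => Subtype.ext hab)
  calc (Γ.attach.filter (fun w => adj w.1 v)).card ≤ _ := h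
    _ ≤ 4 := by
      apply le_trans (Finset.card_insert_le _ _)
      apply Nat.succ_le_succ
      apply le_trans (Finset.card_insert_le _ _)
      apply Nat.succ_le_succ
      apply le_trans (Finset.card_insert_le _ _)
      apply Nat.succ_le_succ
      simp

/-- Maximum principle: a rational function on `Γ` whose Laplacian vanishes everywhere is `≤ 0`. -/
lemma lap_zero_nonpos (Γ : Finset (ℤ × ℤ)) (f : ↥Γ → ℚ)
    (h : ∀ v, lap Γ f v = 0) (v₀ : ↥Γ) : f v₀ ≤ 0 := by
  by_contra hpos
  push_neg at hpos
  -- maximum M of f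
  obtain ⟨u, _, hu⟩ := Finset.exists_max_image Γ.attach f ⟨v₀, Finset.mem_attach _ _⟩
  set M := f u with hM
  have hMpos : 0 < M := lt_of_lt_of_le hpos (hu v₀ (Finset.mem_attach _ _))
  -- maximize first coordinate among maximizers
  have hSne : (Γ.attach.filter (fun w => f w = M)).Nonempty :=
    ⟨u, Finset.mem_filter.2 ⟨Finset.mem_attach _ _, rfl⟩⟩
  obtain ⟨v, hvS, hv⟩ := Finset.exists_max_image _ (fun w : ↥Γ => (w : ℤ × ℤ).1) hSne
  rw [Finset.mem_filter] at hvS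
  have hfv : f v = M := hvS.2
  set F := Γ.attach.filter (fun w => adj w.1 v.1) with hF
  have hsum : ∑ w ∈ F, f w = 4 * M := by
    have := h v
    rw [lap] at this
    have h4 : ∑ w ∈ F, f w = 4 * f v := by linarith
    rw [h4, hfv]
  have hle : ∀ w ∈ F, f w ≤ M := fun w _ => hu w (Finset.mem_attach _ _)
  have hlt : ∑ w ∈ F, f w < 4 * M := by
    by_cases hmem : ((v : ℤ × ℤ).1 + 1, (v : ℤ × ℤ).2) ∈ Γ
    · -- the east neighbour is in Γ but has strictly smaller value
      set w₀ : ↥Γ := ⟨((v : ℤ × ℤ).1 + 1, (v : ℤ × ℤ).2), hmem⟩ with hw₀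
      have hw₀F : w₀ ∈ F := Finset.mem_filter.2 ⟨Finset.mem_attach _ _, adj_right _⟩
      have hw₀lt : f w₀ < M := by
        rcases lt_or_eq_of_le (hu w₀ (Finset.mem_attach _ _)) with hlt' | heq
        · exact hlt'
        · exfalso
          have : (w₀ : ℤ × ℤ).1 ≤ (v : ℤ × ℤ).1 :=
            hv w₀ (Finset.mem_filter.2 ⟨Finset.mem_attach _ _, heq⟩)
          simp only [hw₀] at this
          omega
      have hcard : (F.erase w₀).card ≤ 3 := by
        have h1 := card_nbrs_le Γ (v : ℤ × ℤ)
        rw [← hF] at h1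
        have h2 := Finset.card_erase_of_mem hw₀F
        omega
      have hrest : ∑ w ∈ F.erase w₀, f w ≤ 3 * M := by
        calc ∑ w ∈ F.erase w₀, f w ≤ (F.erase w₀).card • M :=
              Finset.sum_le_card_nsmul _ _ _ (fun w _ => hu w (Finset.mem_attach _ _))
          _ = ((F.erase w₀).card : ℚ) * M := by rw [nsmul_eq_mul]
          _ ≤ 3 * M := by
              apply mul_le_mul_of_nonneg_right _ (le_of_lt hMpos)
              exact_mod_cast hcard
      calc ∑ w ∈ F, f w = f w₀ + ∑ w ∈ F.erase w₀, f w :=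
            (Finset.add_sum_erase _ _ hw₀F).symm
        _ < M + 3 * M := by linarith
        _ = 4 * M := by ring
    · -- the east neighbour is outside Γ : at most 3 neighbours
      have hcard : F.card ≤ 3 := by
        have h := Finset.card_le_card_of_injOn (fun w : ↥Γ => (w : ℤ × ℤ))
          (s := F)
          (t := {((v:ℤ×ℤ).1 - 1, (v:ℤ×ℤ).2), ((v:ℤ×ℤ).1, (v:ℤ×ℤ).2 + 1), ((v:ℤ×ℤ).1, (v:ℤ×ℤ).2 - 1)})
          (by
            intro w hw
            simp only [Finset.mem_coe, hF, Finset.mem_filter] at hw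
            have hcases := (adj_iff (w : ℤ × ℤ) (v : ℤ × ℤ)).1 hw.2
            simp only [Finset.mem_coe, Finset.mem_insert, Finset.mem_singleton]
            rcases hcases with hc | hc | hc | hc
            · exfalso; apply hmem; rw [← hc]; exact w.2
            · tauto
            · tauto
            · tauto)
          (fun a _ b _ hab => Subtype.ext hab)
        have : ({((v:ℤ×ℤ).1 - 1, (v:ℤ×ℤ).2), ((v:ℤ×ℤ).1, (v:ℤ×ℤ).2 + 1), ((v:ℤ×ℤ).1, (v:ℤ×ℤ).2 - 1)} : Finset (ℤ×ℤ)).card ≤ 3 := by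
          apply le_trans (Finset.card_insert_le _ _)
          apply Nat.succ_le_succ
          apply le_trans (Finset.card_insert_le _ _)
          apply Nat.succ_le_succ
          simp
        omega
      calc ∑ w ∈ F, f w ≤ F.card • M :=
            Finset.sum_le_card_nsmul _ _ _ (fun w _ => hu w (Finset.mem_attach _ _))
        _ = (F.card : ℚ) * M := by rw [nsmul_eq_mul]
        _ ≤ 3 * M := by
            apply mul_le_mul_of_nonneg_right _ (le_of_lt hMpos)
            exact_mod_cast hcard
        _ < 4 * M := by linarith
  exact absurd hsum (ne_of_lt hlt)

lemma lap_injective (Γ : Finset (ℤ × ℤ)) (f : ↥Γ → ℚ) (h : ∀ v, lap Γ f v = 0) : f = 0 := by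
  funext v
  have h1 : f v ≤ 0 := lap_zero_nonpos Γ f h v
  have h2 : (-f) v ≤ 0 := lap_zero_nonpos Γ (-f) (fun w => by rw [lap_neg]; simp [h w]) v
  simp only [Pi.neg_apply] at h2
  have : f v = 0 := le_antisymm h1 (by linarith)
  simpa using this

/-- The Laplacian over `ℚ` as a linear map. -/
def lapLin (Γ : Finset (ℤ × ℤ)) : (↥Γ → ℚ) →ₗ[ℚ] (↥Γ → ℚ) where
  toFun := lap Γ
  map_add' := lap_add Γ
  map_smul' := lap_smul Γ

lemma lapQ_bijective (Γ : Finset (ℤ × ℤ)) :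
    Function.Bijective (lap Γ : (↥Γ → ℚ) → (↥Γ → ℚ)) := by
  have hinj : Function.Injective (lapLin Γ) := by
    intro a b hab
    have : lap Γ (a - b) = 0 := by
      rw [lap_sub]
      have : lap Γ a = lap Γ b := hab
      rw [this, sub_self]
    have := lap_injective Γ (a - b) (fun v => by rw [this]; rfl)
    exact sub_eq_zero.1 this
  exact ⟨hinj, LinearMap.surjective_of_injective hinj⟩

/-- Dirac delta at `p`, as an integer function on `Γ`. -/
def delta (Γ : Finset (ℤ × ℤ)) (p : ℤ × ℤ) : ↥Γ → ℤ :=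
  fun u => if (u : ℤ × ℤ) = p then 1 else 0

lemma lap_delta (Γ : Finset (ℤ × ℤ)) (p : ℤ × ℤ) (v : ↥Γ) :
    lap Γ (delta Γ p) v =
      (if p ∈ Γ ∧ adj p v then 1 else 0) - 4 * (if (v : ℤ × ℤ) = p then 1 else 0) := by
  unfold lap delta
  congr 1
  by_cases hp : p ∈ Γ ∧ adj p (v : ℤ × ℤ)
  · rw [if_pos hp]
    have hmem : (⟨p, hp.1⟩ : ↥Γ) ∈ Γ.attach.filter (fun w => adj w.1 (v : ℤ × ℤ)) :=
      Finset.mem_filter.2 ⟨Finset.mem_attach _ _, hp.2⟩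
    have h := Finset.sum_eq_single_of_mem
      (f := fun w : ↥Γ => if (w : ℤ × ℤ) = p then (1 : ℤ) else 0)
      (⟨p, hp.1⟩ : ↥Γ) hmem
      (fun b _ hb => if_neg (fun hc => hb (Subtype.ext hc)))
    simpa using h
  · rw [if_neg hp]
    apply Finset.sum_eq_zero
    intro w hw
    rw [Finset.mem_filter] at hw
    apply if_neg
    intro hc
    exact hp ⟨hc ▸ w.2, hc ▸ hw.2⟩

/-- One can solve `Δ n = m` on the interior with integer coefficients. -/
lemma solve_interior (Γ : Finset (ℤ × ℤ)) (m : ↥Γ → ℤ) :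
    ∃ n : ↥Γ → ℤ, ∀ v : ↥Γ, (v : ℤ × ℤ) ∉ boundary Γ → lap Γ n v = m v := by
  rcases Γ.eq_empty_or_nonempty with rfl | hne
  · exact ⟨0, fun v => absurd v.2 (Finset.notMem_empty _)⟩
  obtain ⟨lo, hlo⟩ : ∃ lo : ℤ, ∀ v ∈ Γ, lo ≤ v.1 := by
    refine ⟨(Γ.image Prod.fst).min' (hne.image _), fun v hv => ?_⟩
    exact Finset.min'_le _ _ (Finset.mem_image_of_mem _ hv)
  obtain ⟨hi, hhi⟩ : ∃ hi : ℤ, ∀ v ∈ Γ, v.1 ≤ hi := by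
    refine ⟨(Γ.image Prod.fst).max' (hne.image _), fun v hv => ?_⟩
    exact Finset.le_max' _ _ (Finset.mem_image_of_mem _ hv)
  have key : ∀ k : ℕ, ∃ n : ↥Γ → ℤ,
      ∀ v : ↥Γ, (v : ℤ × ℤ) ∉ boundary Γ → (v : ℤ × ℤ).1 < lo + k → lap Γ n v = m v := by
    intro k
    induction k with
    | zero =>
      refine ⟨0, fun v _ hlt => ?_⟩
      exact absurd hlt (by have := hlo v v.2; push_cast; omega)
    | succ k ih =>
      obtain ⟨n, hn⟩ := ih
      set L := Γ.attach.filter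
        (fun w : ↥Γ => (w : ℤ × ℤ) ∉ boundary Γ ∧ (w : ℤ × ℤ).1 = lo + k) with hLdef
      refine ⟨n + ∑ w ∈ L, (m w - lap Γ n w) • delta Γ ((w : ℤ × ℤ).1 + 1, (w : ℤ × ℤ).2), ?_⟩
      intro v hv hvlt
      rw [lap_add, Pi.add_apply, lap_sum, Finset.sum_apply]
      have hterm : ∀ w : ↥Γ,
          lap Γ ((m w - lap Γ n w) • delta Γ ((w:ℤ×ℤ).1 + 1, (w:ℤ×ℤ).2)) v
            = (m w - lap Γ n w) *
              ((if ((w:ℤ×ℤ).1 + 1, (w:ℤ×ℤ).2) ∈ Γ ∧ adj ((w:ℤ×ℤ).1 + 1, (w:ℤ×ℤ).2) (v:ℤ×ℤ)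
                 then 1 else 0)
               - 4 * (if (v:ℤ×ℤ) = ((w:ℤ×ℤ).1 + 1, (w:ℤ×ℤ).2) then 1 else 0)) := by
        intro w
        rw [lap_smul]
        simp only [Pi.smul_apply, smul_eq_mul, lap_delta]
      rcases lt_or_eq_of_le (show (v:ℤ×ℤ).1 ≤ lo + k by push_cast at hvlt; omega) with hcase | hcase
      · -- lower levels are unaffected
        have hzero : ∀ w ∈ L,
            lap Γ ((m w - lap Γ n w) • delta Γ ((w:ℤ×ℤ).1 + 1, (w:ℤ×ℤ).2)) v = 0 := by
          intro w hw
          rw [hLdef, Finset.mem_filter] at hw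
          rw [hterm]
          have hx : ((w:ℤ×ℤ).1 + 1) = lo + k + 1 := by omega
          have hwx : (w : ℤ × ℤ).1 = lo + (k : ℤ) := hw.2.2
          have hne1 : ¬ adj ((w:ℤ×ℤ).1 + 1, (w:ℤ×ℤ).2) (v:ℤ×ℤ) := by
            intro hadj
            rcases (adj_iff _ _).1 hadj with hc | hc | hc | hc <;>
              rw [Prod.mk.injEq] at hc <;> omega
          have hne2 : (v:ℤ×ℤ) ≠ ((w:ℤ×ℤ).1 + 1, (w:ℤ×ℤ).2) := by
            intro hc
            rw [Prod.ext_iff] at hc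
            omega
          rw [if_neg (fun hc => hne1 hc.2), if_neg hne2]
          ring
        rw [Finset.sum_eq_zero hzero, add_zero]
        exact hn v hv (by push_cast; omega)
      · -- at the current level: single contribution from w = v
        have hvL : v ∈ L := by
          rw [hLdef, Finset.mem_filter]
          exact ⟨Finset.mem_attach _ _, hv, hcase.symm ▸ rfl⟩
        have hTv : ((v:ℤ×ℤ).1 + 1, (v:ℤ×ℤ).2) ∈ Γ :=
          interior_nbr_mem v.2 hv (adj_right (v:ℤ×ℤ))
        have hmain : ∑ w ∈ L, lap Γ ((m w - lap Γ n w) • delta Γ ((w:ℤ×ℤ).1 + 1, (w:ℤ×ℤ).2)) v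
            = m v - lap Γ n v := by
          rw [Finset.sum_eq_single_of_mem v hvL]
          · rw [hterm]
            have h1 : ((v:ℤ×ℤ).1 + 1, (v:ℤ×ℤ).2) ∈ Γ ∧ adj ((v:ℤ×ℤ).1 + 1, (v:ℤ×ℤ).2) (v:ℤ×ℤ) :=
              ⟨hTv, adj_right _⟩
            have h2 : (v:ℤ×ℤ) ≠ ((v:ℤ×ℤ).1 + 1, (v:ℤ×ℤ).2) := by
              intro hc; rw [Prod.ext_iff] at hc; omega
            rw [if_pos h1, if_neg h2]
            ring
          · intro w hw hwv
            rw [hLdef, Finset.mem_filter] at hw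
            rw [hterm]
            have hwx : (w : ℤ × ℤ).1 = lo + (k : ℤ) := hw.2.2
            have hne1 : ¬ adj ((w:ℤ×ℤ).1 + 1, (w:ℤ×ℤ).2) (v:ℤ×ℤ) := by
              intro hadj
              rcases (adj_iff _ _).1 hadj with hc | hc | hc | hc <;>
                rw [Prod.mk.injEq] at hc
              · -- east case : forces w = v
                exact hwv (Subtype.ext (Prod.ext (by omega) hc.2))
              · omega
              · omega
              · omega
            have hne2 : (v:ℤ×ℤ) ≠ ((w:ℤ×ℤ).1 + 1, (w:ℤ×ℤ).2) := by
              intro hc; rw [Prod.ext_iff] at hc; omega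
            rw [if_neg (fun hc => hne1 hc.2), if_neg hne2]
            ring
        rw [hmain]
        ring
  obtain ⟨n, hn⟩ := key (hi - lo + 1).toNat
  exact ⟨n, fun v hv => hn v hv (by have := hhi v v.2; have := hlo v v.2; push_cast; omega)⟩

/-! ### The map `H ↦ [−Δ H]` -/

noncomputable def gOf (Γ : Finset (ℤ × ℤ)) (H : ↥(HarmIntLap Γ)) : ↥Γ → ℤ :=
  fun v => (H.2.2 v).choose

lemma gOf_spec (Γ : Finset (ℤ × ℤ)) (H : ↥(HarmIntLap Γ)) (v : ↥Γ) :
    ((gOf Γ H v : ℤ) : ℚ) = lap Γ (↑H : ↥Γ → ℚ) v := (H.2.2 v).choose_spec.symm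

lemma gOf_eq (Γ : Finset (ℤ × ℤ)) (H : ↥(HarmIntLap Γ)) (g : ↥Γ → ℤ)
    (hg : ∀ v, (g v : ℚ) = lap Γ (↑H : ↥Γ → ℚ) v) : g = gOf Γ H := by
  funext v
  have := gOf_spec Γ H v
  exact_mod_cast (hg v).trans this.symm

noncomputable def phi (Γ : Finset (ℤ × ℤ)) : ↥(HarmIntLap Γ) →+ SandpileGroup Γ :=
  AddMonoidHom.mk' (fun H => sandMk Γ (-(gOf Γ H))) (by
    intro a b
    have hab : gOf Γ (a + b) = gOf Γ a + gOf Γ b := by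
      refine (gOf_eq Γ (a + b) (gOf Γ a + gOf Γ b) (fun v => ?_)).symm
      have hcoe : ((↑(a + b) : ↥Γ → ℚ)) = (↑a : ↥Γ → ℚ) + ↑b := rfl
      rw [hcoe, lap_add, Pi.add_apply, Pi.add_apply]
      push_cast
      rw [gOf_spec, gOf_spec]
    show sandMk Γ (-(gOf Γ (a + b))) = sandMk Γ (-(gOf Γ a)) + sandMk Γ (-(gOf Γ b))
    rw [hab, neg_add, map_add])

lemma phi_eq (Γ : Finset (ℤ × ℤ)) (H : ↥(HarmIntLap Γ)) (g : ↥Γ → ℤ)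
    (hg : ∀ v, (g v : ℚ) = lap Γ (↑H : ↥Γ → ℚ) v) : phi Γ H = sandMk Γ (-g) := by
  have := gOf_eq Γ H g hg
  show sandMk Γ (-(gOf Γ H)) = sandMk Γ (-g)
  rw [this]

lemma sandMk_eq_zero (Γ : Finset (ℤ × ℤ)) (g : ↥Γ → ℤ) (h : g ∈ (lapHom Γ).range) :
    sandMk Γ g = 0 := (QuotientAddGroup.eq_zero_iff g).2 h

lemma sandMk_zero_iff (Γ : Finset (ℤ × ℤ)) (g : ↥Γ → ℤ) :
    sandMk Γ g = 0 ↔ g ∈ (lapHom Γ).range := QuotientAddGroup.eq_zero_iff g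

/-- Kernel of `phi` is exactly the integral harmonic functions. -/
lemma phi_ker (Γ : Finset (ℤ × ℤ)) (H : ↥(HarmIntLap Γ)) :
    phi Γ H = 0 ↔ (↑H : ↥Γ → ℚ) ∈ HarmZinQ Γ := by
  constructor
  · intro h
    have h0 : -(gOf Γ H) ∈ (lapHom Γ).range := (sandMk_zero_iff Γ _).1 h
    obtain ⟨n, hn⟩ := h0
    -- K := H + cast n has zero Laplacian
    set K : ↥Γ → ℚ := (↑H : ↥Γ → ℚ) + (fun v => ((n v : ℤ) : ℚ)) with hK
    have hKlap : ∀ v, lap Γ K v = 0 := by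
      intro v
      rw [hK, lap_add, Pi.add_apply, lap_cast]
      have h1 : lap Γ n = -(gOf Γ H) := hn
      rw [h1]
      rw [← gOf_spec]
      simp
    have hK0 : K = 0 := lap_injective Γ K hKlap
    have hHval : ∀ v, (↑H : ↥Γ → ℚ) v = ((-(n v) : ℤ) : ℚ) := by
      intro v
      have := congrFun hK0 v
      rw [hK] at this
      simp only [Pi.add_apply, Pi.zero_apply] at this
      push_cast
      linarith
    exact ⟨H.2.1, fun v => ⟨-(n v), hHval v⟩⟩
  · intro h
    obtain ⟨hharm, hint⟩ := h
    choose z hz using hint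
    have hcast : ∀ v, ((lap Γ z v : ℤ) : ℚ) = lap Γ (↑H : ↥Γ → ℚ) v := by
      intro v
      rw [← lap_cast]
      congr 1
      funext w
      exact (hz w).symm
    have hg : gOf Γ H = lap Γ z := by
      rw [← gOf_eq Γ H (lap Γ z) (fun v => hcast v)]
    apply (sandMk_zero_iff Γ _).2
    exact ⟨-z, by rw [map_neg]; show -(lap Γ z) = -(gOf Γ H); rw [hg]⟩

lemma phi_surjective (Γ : Finset (ℤ × ℤ)) : Function.Surjective (phi Γ) := by
  intro q
  obtain ⟨m, rfl⟩ := QuotientAddGroup.mk'_surjective (lapHom Γ).range q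
  obtain ⟨n, hn⟩ := solve_interior Γ (-m)
  obtain ⟨Hf, hHf⟩ := (lapQ_bijective Γ).2 (fun v => -(((m v : ℤ) : ℚ) + ((lap Γ n v : ℤ) : ℚ)))
  have hlapval : ∀ v, lap Γ Hf v = -(((m v : ℤ) : ℚ) + ((lap Γ n v : ℤ) : ℚ)) :=
    fun v => congrFun hHf v
  have hharm : Harmonic Γ Hf := by
    intro v hv
    rw [hlapval v, hn v hv]
    simp
  have hmem : Hf ∈ HarmIntLap Γ :=
    ⟨hharm, fun v => ⟨-(m v + lap Γ n v), by rw [hlapval v]; push_cast; ring⟩⟩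
  refine ⟨⟨Hf, hmem⟩, ?_⟩
  have hphi : phi Γ ⟨Hf, hmem⟩ = sandMk Γ (-(-(m + lap Γ n))) := by
    apply phi_eq
    intro v
    rw [hlapval v]
    simp
  rw [hphi, neg_neg, map_add]
  have : sandMk Γ (lap Γ n) = 0 := sandMk_eq_zero Γ _ ⟨n, rfl⟩
  rw [this, add_zero]
  rfl

/-- For a finite nonempty convex domain `Γ ⊂ ℤ²`, the map
`H ↦ [−Δ_Γ H]` induces a group isomorphism from
`ℋ_G^Γ = {H ∈ ℋ_ℚ^Γ : Δ_Γ H ∈ ℤ^Γ} / ℋ_ℤ^Γ` onto the sandpile group `G_Γ`. -/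
theorem sandpile_group_iso_harmonic (Γ : Finset (ℤ × ℤ)) (hne : Γ.Nonempty)
    (hconv : IsConvexDomain Γ) :
    ∃ e : (↥(HarmIntLap Γ) ⧸ (HarmZinQ Γ).addSubgroupOf (HarmIntLap Γ)) ≃+ SandpileGroup Γ,
      ∀ (H : ↥(HarmIntLap Γ)) (g : ↥Γ → ℤ),
        (∀ v : ↥Γ, (g v : ℚ) = lap Γ (↑H : ↥Γ → ℚ) v) →
        e (QuotientAddGroup.mk H) = sandMk Γ (-g) := by
  have hker_le : (HarmZinQ Γ).addSubgroupOf (HarmIntLap Γ) ≤ (phi Γ).ker := by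
    intro H hH
    rw [AddMonoidHom.mem_ker, phi_ker]
    exact hH
  set e0 : (↥(HarmIntLap Γ) ⧸ (HarmZinQ Γ).addSubgroupOf (HarmIntLap Γ)) →+ SandpileGroup Γ :=
    QuotientAddGroup.lift _ (phi Γ) hker_le with he0
  have hinj : Function.Injective e0 := by
    rw [injective_iff_map_eq_zero]
    intro a
    induction a using QuotientAddGroup.induction_on with
    | H x =>
      intro hx
      have : phi Γ x = 0 := hx
      rw [phi_ker] at this
      exact (QuotientAddGroup.eq_zero_iff x).2 this
  have hsurj : Function.Surjective e0 := by
    intro q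
    obtain ⟨H, hH⟩ := phi_surjective Γ q
    exact ⟨QuotientAddGroup.mk H, hH⟩
  refine ⟨AddEquiv.ofBijective e0 ⟨hinj, hsurj⟩, ?_⟩
  intro H g hg
  show e0 (QuotientAddGroup.mk H) = sandMk Γ (-g)
  have : e0 (QuotientAddGroup.mk H) = phi Γ H := rfl
  rw [this, phi_eq Γ H g hg]
end

section
/- Let Γ ⊂ ℤ² be a finite nonempty convex domain. Every ℤ-basis of the module ℋ_ℤ^Γ of integer-valued harmonic functions on Γ is also a basis of the ℚ-vector space ℋ_ℚ^Γ of rational-valued harmonic functions on Γ; in particular, dim_ℚ ℋ_ℚ^Γ = |∂Γ|. -/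
def nbrs (v : ℤ × ℤ) : Finset (ℤ × ℤ) :=
  {(v.1 + 1, v.2), (v.1 - 1, v.2), (v.1, v.2 + 1), (v.1, v.2 - 1)}

lemma adj_mem_nbrs {u v : ℤ × ℤ} : adj u v ↔ u ∈ nbrs v := by
  unfold adj nbrs
  simp only [Finset.mem_insert, Finset.mem_singleton]
  constructor
  · intro h
    have h1 : (u.1 - v.1) ^ 2 ≤ 1 := by nlinarith [sq_nonneg (u.2 - v.2)]
    have h2 : (u.2 - v.2) ^ 2 ≤ 1 := by nlinarith [sq_nonneg (u.1 - v.1)]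
    have hb1 : -1 ≤ u.1 - v.1 ∧ u.1 - v.1 ≤ 1 := by
      constructor <;> nlinarith
    have hb2 : -1 ≤ u.2 - v.2 ∧ u.2 - v.2 ≤ 1 := by
      constructor <;> nlinarith
    have ha : u.1 - v.1 = -1 ∨ u.1 - v.1 = 0 ∨ u.1 - v.1 = 1 := by omega
    have hb : u.2 - v.2 = -1 ∨ u.2 - v.2 = 0 ∨ u.2 - v.2 = 1 := by omega
    have hu : u = (u.1, u.2) := rfl
    rcases ha with h'|h'|h' <;> rcases hb with h''|h''|h'' <;>
      rw [h', h''] at h <;> norm_num at h <;>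
      rw [hu] <;> simp [Prod.ext_iff] <;> omega
  · rintro (h|h|h|h) <;> rw [h] <;> ring
lemma card_nbrs_le_s4 (v : ℤ × ℤ) : (nbrs v).card ≤ 4 := by
  unfold nbrs
  apply (Finset.card_insert_le _ _).trans
  have := (Finset.card_insert_le (v.1 - 1, v.2) ({(v.1, v.2 + 1), (v.1, v.2 - 1)} : Finset (ℤ×ℤ)))
  have := (Finset.card_insert_le (v.1, v.2 + 1) ({(v.1, v.2 - 1)} : Finset (ℤ×ℤ)))
  simp_all
  omega

lemma nonpos_of_dirichlet (Γ : Finset (ℤ × ℤ)) (c : ↥Γ → ℚ)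
    (hb : ∀ v : ↥Γ, (v : ℤ × ℤ) ∈ boundary Γ → c v = 0)
    (hh : Harmonic Γ c) (v : ↥Γ) : c v ≤ 0 := by
  by_contra hpos
  push_neg at hpos
  have hne : (Finset.univ : Finset ↥Γ).Nonempty := ⟨v, Finset.mem_univ v⟩
  obtain ⟨v₀, -, hv₀⟩ := Finset.exists_mem_eq_sup' hne c
  set m := Finset.univ.sup' hne c with hm
  have hmax : ∀ u : ↥Γ, c u ≤ m := fun u => Finset.le_sup' c (Finset.mem_univ u)
  have hmpos : 0 < m := lt_of_lt_of_le hpos (hmax v)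
  classical
  set S : Finset ↥Γ := Finset.univ.filter (fun u => c u = m) with hS
  have hSne : S.Nonempty := ⟨v₀, by simp [hS, hv₀.symm]⟩
  obtain ⟨u, huS, humax⟩ := Finset.exists_max_image S (fun w => (w : ℤ × ℤ).1) hSne
  have hcu : c u = m := (Finset.mem_filter.mp huS).2
  have hub : (u : ℤ × ℤ) ∉ boundary Γ := fun h => by
    rw [hb u h] at hcu; exact absurd hcu.symm (ne_of_gt hmpos)
  have hlap := hh u hub
  rw [lap, sub_eq_zero] at hlap
  set N : Finset ↥Γ := Γ.attach.filter (fun w => adj (w : ℤ × ℤ) (u : ℤ × ℤ)) with hN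
  have hNsum : ∑ w ∈ N, c w = 4 * m := by rw [hlap, hcu]
  set w₀ : ℤ × ℤ := ((u : ℤ × ℤ).1 + 1, (u : ℤ × ℤ).2) with hw₀
  have hadj : adj w₀ (u : ℤ × ℤ) := by unfold adj; simp [hw₀]
  have hNcard : N.card ≤ (nbrs (u : ℤ × ℤ)).card := by
    refine Finset.card_le_card_of_injOn (fun w : ↥Γ => (w : ℤ × ℤ)) ?_ ?_
    · intro w hw
      exact adj_mem_nbrs.mp (Finset.mem_filter.mp hw).2
    · exact fun a _ b _ h => Subtype.ext h
  by_cases hw : w₀ ∈ Γ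
  · set W : ↥Γ := ⟨w₀, hw⟩ with hW
    have hWN : W ∈ N := Finset.mem_filter.mpr ⟨Finset.mem_attach _ _, hadj⟩
    have hWlt : c W < m := by
      rcases lt_or_eq_of_le (hmax W) with h | h
      · exact h
      · exfalso
        have : W ∈ S := Finset.mem_filter.mpr ⟨Finset.mem_univ _, h⟩
        have := humax W this
        simp [hW, hw₀] at this
    have hsplit : ∑ w ∈ N, c w = c W + ∑ w ∈ N.erase W, c w :=
      (Finset.add_sum_erase N c hWN).symm
    have herase : (N.erase W).card ≤ 3 := by
      have := Finset.card_erase_of_mem hWN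
      have h4 := hNcard.trans (card_nbrs_le_s4 _)
      omega
    have hbound : ∑ w ∈ N.erase W, c w ≤ 3 * m := by
      calc ∑ w ∈ N.erase W, c w ≤ (N.erase W).card • m :=
            Finset.sum_le_card_nsmul _ _ m (fun w _ => hmax w)
        _ = ((N.erase W).card : ℚ) * m := by rw [nsmul_eq_mul]
        _ ≤ 3 * m := by
            apply mul_le_mul_of_nonneg_right _ (le_of_lt hmpos)
            exact_mod_cast herase
    rw [hsplit] at hNsum
    linarith
  · have hN3 : N.card ≤ 3 := by
      have hmem : w₀ ∈ nbrs (u : ℤ × ℤ) := adj_mem_nbrs.mp hadj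
      have : N.card ≤ ((nbrs (u : ℤ × ℤ)).erase w₀).card := by
        refine Finset.card_le_card_of_injOn (fun w : ↥Γ => (w : ℤ × ℤ)) ?_ ?_
        · intro w hwN
          refine Finset.mem_erase.mpr ⟨?_, adj_mem_nbrs.mp (Finset.mem_filter.mp hwN).2⟩
          intro h
          exact hw (h ▸ w.2)
        · exact fun a _ b _ h => Subtype.ext h
      have := Finset.card_erase_of_mem hmem
      have h4 := card_nbrs_le_s4 (u : ℤ × ℤ)
      omega
    have hbound : ∑ w ∈ N, c w ≤ 3 * m := by
      calc ∑ w ∈ N, c w ≤ N.card • m :=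
            Finset.sum_le_card_nsmul _ _ m (fun w _ => hmax w)
        _ = (N.card : ℚ) * m := by rw [nsmul_eq_mul]
        _ ≤ 3 * m := by
            apply mul_le_mul_of_nonneg_right _ (le_of_lt hmpos)
            exact_mod_cast hN3
    linarith

lemma dirichlet_zero (Γ : Finset (ℤ × ℤ)) (c : ↥Γ → ℚ)
    (hb : ∀ v : ↥Γ, (v : ℤ × ℤ) ∈ boundary Γ → c v = 0)
    (hh : Harmonic Γ c) : c = 0 := by
  funext v
  have h1 := nonpos_of_dirichlet Γ c hb hh v
  have h2 := nonpos_of_dirichlet Γ (-c) (fun w hw => by simp [hb w hw])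
    ((HarmQ Γ).neg_mem hh) v
  simp only [Pi.neg_apply, neg_nonpos] at h2
  exact le_antisymm h1 h2

/-- Extension by zero of a function on the interior. -/
noncomputable def extFun (Γ : Finset (ℤ × ℤ))
    (c : {v : ↥Γ // (v : ℤ × ℤ) ∉ boundary Γ} → ℚ) : ↥Γ → ℚ :=
  fun u => if h : (u : ℤ × ℤ) ∈ boundary Γ then 0 else c ⟨u, h⟩

lemma extFun_add (Γ : Finset (ℤ × ℤ)) (c d : {v : ↥Γ // (v : ℤ × ℤ) ∉ boundary Γ} → ℚ) :
    extFun Γ (c + d) = extFun Γ c + extFun Γ d := by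
  funext u
  by_cases h : (u : ℤ × ℤ) ∈ boundary Γ <;> simp [extFun, h]

lemma extFun_smul (Γ : Finset (ℤ × ℤ)) (q : ℚ) (c : {v : ↥Γ // (v : ℤ × ℤ) ∉ boundary Γ} → ℚ) :
    extFun Γ (q • c) = q • extFun Γ c := by
  funext u
  by_cases h : (u : ℤ × ℤ) ∈ boundary Γ <;> simp [extFun, h]

/-- The Dirichlet Laplacian from interior to interior. -/
noncomputable def dirLap (Γ : Finset (ℤ × ℤ)) :
    ({v : ↥Γ // (v : ℤ × ℤ) ∉ boundary Γ} → ℚ) →ₗ[ℚ]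
    ({v : ↥Γ // (v : ℤ × ℤ) ∉ boundary Γ} → ℚ) where
  toFun c := fun v => lap Γ (extFun Γ c) v.1
  map_add' c d := by funext v; rw [extFun_add, lap_add]; rfl
  map_smul' q c := by funext v; rw [extFun_smul, lap_smul]; rfl

lemma dirLap_inj (Γ : Finset (ℤ × ℤ)) : Function.Injective (dirLap Γ) := by
  rw [injective_iff_map_eq_zero]
  intro c hc
  have hz : extFun Γ c = 0 := by
    apply dirichlet_zero Γ
    · intro v hv; simp [extFun, hv]
    · intro v hv
      exact congrFun hc ⟨v, hv⟩
  funext v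
  have := congrFun hz v.1
  simpa [extFun, v.2] using this

lemma dirLap_surj (Γ : Finset (ℤ × ℤ)) : Function.Surjective (dirLap Γ) :=
  (LinearMap.injective_iff_surjective).mp (dirLap_inj Γ)

/-- Restriction to the boundary, as a linear map on rational harmonic functions. -/
noncomputable def bdryRes (Γ : Finset (ℤ × ℤ)) :
    ↥(HarmQmod Γ) →ₗ[ℚ] ({v : ↥Γ // (v : ℤ × ℤ) ∈ boundary Γ} → ℚ) where
  toFun f := fun v => (f : ↥Γ → ℚ) v.1
  map_add' f g := rfl
  map_smul' q f := rfl

lemma bdryRes_inj (Γ : Finset (ℤ × ℤ)) : Function.Injective (bdryRes Γ) := by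
  rw [injective_iff_map_eq_zero]
  intro f hf
  apply Subtype.ext
  apply dirichlet_zero Γ
  · intro v hv
    exact congrFun hf ⟨v, hv⟩
  · exact f.2

lemma bdryRes_surj (Γ : Finset (ℤ × ℤ)) : Function.Surjective (bdryRes Γ) := by
  intro b
  classical
  set fb : ↥Γ → ℚ := fun u => if h : (u : ℤ × ℤ) ∈ boundary Γ then b ⟨u, h⟩ else 0 with hfb
  set t : {v : ↥Γ // (v : ℤ × ℤ) ∉ boundary Γ} → ℚ := fun v => lap Γ fb v.1 with ht
  obtain ⟨c, hc⟩ := dirLap_surj Γ (-t)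
  have hharm : Harmonic Γ (fb + extFun Γ c) := by
    intro v hv
    rw [lap_add]
    have h1 : lap Γ (extFun Γ c) v = (-t) ⟨v, hv⟩ := congrFun hc ⟨v, hv⟩
    simp only [Pi.add_apply, h1, ht]
    simp
  refine ⟨⟨fb + extFun Γ c, hharm⟩, ?_⟩
  funext v
  show (fb + extFun Γ c) v.1 = b v
  simp [hfb, extFun, v.2]

noncomputable def bdryEquiv (Γ : Finset (ℤ × ℤ)) :
    ↥(HarmQmod Γ) ≃ₗ[ℚ] ({v : ↥Γ // (v : ℤ × ℤ) ∈ boundary Γ} → ℚ) :=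
  LinearEquiv.ofBijective (bdryRes Γ) ⟨bdryRes_inj Γ, bdryRes_surj Γ⟩

lemma finrank_harmQmod (Γ : Finset (ℤ × ℤ)) :
    Module.finrank ℚ ↥(HarmQmod Γ) = (boundary Γ).card := by
  classical
  rw [(bdryEquiv Γ).finrank_eq, Module.finrank_fintype_fun_eq_card]
  rw [← Fintype.card_coe (boundary Γ)]
  apply Fintype.card_congr
  exact {
    toFun := fun v => ⟨(v.1 : ℤ × ℤ), v.2⟩
    invFun := fun w => ⟨⟨(w : ℤ × ℤ), boundary_subset Γ w.2⟩, w.2⟩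
    left_inv := fun v => rfl
    right_inv := fun w => rfl }

/-- Coefficient-wise cast `ℤ^Γ → ℚ^Γ`, as a `ℤ`-linear map. -/
def castL (Γ : Finset (ℤ × ℤ)) : (↥Γ → ℤ) →ₗ[ℤ] (↥Γ → ℚ) where
  toFun f := fun v => (f v : ℚ)
  map_add' f g := by funext v; simp
  map_smul' z f := by funext v; simp

lemma castL_inj (Γ : Finset (ℤ × ℤ)) : Function.Injective (castL Γ) := by
  intro f g h
  funext v
  have := congrFun h v
  simp only [castL, LinearMap.coe_mk, AddHom.coe_mk] at this
  exact_mod_cast this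

lemma lap_cast_s4 (Γ : Finset (ℤ × ℤ)) (f : ↥Γ → ℤ) (v : ↥Γ) :
    lap Γ (castL Γ f) v = ((lap Γ f v : ℤ) : ℚ) := by
  simp only [lap, castL, LinearMap.coe_mk, AddHom.coe_mk]
  push_cast
  ring

lemma harmonic_cast {Γ : Finset (ℤ × ℤ)} {f : ↥Γ → ℤ} (hf : Harmonic Γ f) :
    Harmonic Γ (castL Γ f) := by
  intro v hv
  rw [lap_cast_s4, hf v hv]
  simp

/-- The cast map from integer harmonic functions to rational harmonic functions. -/
def castHarm (Γ : Finset (ℤ × ℤ)) : ↥(HarmZ Γ) →ₗ[ℤ] ↥(HarmQmod Γ) where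
  toFun f := ⟨castL Γ f.1, harmonic_cast f.2⟩
  map_add' f g := by
    apply Subtype.ext
    show castL Γ (↑f + ↑g) = castL Γ ↑f + castL Γ ↑g
    exact map_add _ _ _
  map_smul' z f := by
    apply Subtype.ext
    funext v
    show ((z • (f : ↥Γ → ℤ)) v : ℚ) = (z • (⟨castL Γ f.1, harmonic_cast f.2⟩ : ↥(HarmQmod Γ)) : ↥Γ → ℚ) v
    push_cast
    simp [castL]

lemma li_castHarm (Γ : Finset (ℤ × ℤ)) {ι : Type} (B : Module.Basis ι ℤ ↥(HarmZ Γ)) :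
    LinearIndependent ℚ (fun i => castHarm Γ (B i)) := by
  have h1 : LinearIndependent ℤ (fun i => castL Γ ((B i : ↥Γ → ℤ))) := by
    have := B.linearIndependent
    have h2 := this.map' ((castL Γ).comp (HarmZ Γ).subtype)
      (LinearMap.ker_eq_bot.mpr ((castL_inj Γ).comp Subtype.val_injective))
    exact h2
  have h3 : LinearIndependent ℚ (fun i => castL Γ ((B i : ↥Γ → ℤ))) :=
    (LinearIndependent.iff_fractionRing ℤ ℚ).mp h1
  exact LinearIndependent.of_comp (HarmQmod Γ).subtype h3

lemma span_castHarm (Γ : Finset (ℤ × ℤ)) {ι : Type} (B : Module.Basis ι ℤ ↥(HarmZ Γ)) :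
    ⊤ ≤ Submodule.span ℚ (Set.range (fun i => castHarm Γ (B i))) := by
  intro f _
  classical
  set d : ℕ := ∏ v : ↥Γ, ((f : ↥Γ → ℚ) v).den with hd
  have hdpos : 0 < d := Finset.prod_pos (fun v _ => ((f : ↥Γ → ℚ) v).pos)
  have key : ∀ v : ↥Γ, ∃ z : ℤ, (f : ↥Γ → ℚ) v * (d : ℚ) = (z : ℚ) := by
    intro v
    obtain ⟨k, hk⟩ : ((f : ↥Γ → ℚ) v).den ∣ d := Finset.dvd_prod_of_mem _ (Finset.mem_univ v)
    refine ⟨((f : ↥Γ → ℚ) v).num * (k : ℤ), ?_⟩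
    have hden : ((((f : ↥Γ → ℚ) v).den : ℚ)) ≠ 0 := by
      exact_mod_cast ((f : ↥Γ → ℚ) v).pos.ne'
    rw [hk]
    push_cast
    rw [← mul_assoc, Rat.mul_den_eq_num]
  choose g hg using key
  have hcast : castL Γ g = (d : ℚ) • (f : ↥Γ → ℚ) := by
    funext v
    simp only [castL, LinearMap.coe_mk, AddHom.coe_mk, Pi.smul_apply, smul_eq_mul, ← hg v]
    ring
  have hgH : Harmonic Γ g := by
    intro v hv
    have h1 : lap Γ (castL Γ g) v = 0 := by
      rw [hcast, lap_smul]
      have h2 : lap Γ (f : ↥Γ → ℚ) v = 0 := f.2 v hv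
      simp [h2]
    rw [lap_cast_s4] at h1
    exact_mod_cast h1
  set G : ↥(HarmZ Γ) := ⟨g, hgH⟩ with hG
  have hGmem : castHarm Γ G ∈ Submodule.span ℚ (Set.range (fun i => castHarm Γ (B i))) := by
    have h1 : G ∈ Submodule.span ℤ (Set.range ⇑B) := by rw [B.span_eq]; trivial
    have h2 : castHarm Γ G ∈ Submodule.map (castHarm Γ) (Submodule.span ℤ (Set.range ⇑B)) :=
      Submodule.mem_map_of_mem h1
    rw [Submodule.map_span] at h2
    have h3 : Submodule.span ℤ (⇑(castHarm Γ) '' Set.range ⇑B) ≤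
        (Submodule.span ℚ (Set.range (fun i => castHarm Γ (B i)))).restrictScalars ℤ := by
      rw [Submodule.span_le]
      rintro x ⟨y, ⟨i, rfl⟩, rfl⟩
      exact Submodule.subset_span ⟨i, rfl⟩
    exact h3 h2
  have hd0 : (d : ℚ) ≠ 0 := by exact_mod_cast hdpos.ne'
  have hf : f = ((d : ℚ)⁻¹) • castHarm Γ G := by
    apply Subtype.ext
    show (f : ↥Γ → ℚ) = (d : ℚ)⁻¹ • (castL Γ g)
    rw [hcast, smul_smul, inv_mul_cancel₀ hd0, one_smul]
  rw [hf]
  exact Submodule.smul_mem _ _ hGmem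

/-- For a finite nonempty convex domain `Γ ⊂ ℤ²`, every `ℤ`-basis
of the module `ℋ_ℤ^Γ` of integer-valued harmonic functions is also a basis of the
`ℚ`-vector space `ℋ_ℚ^Γ` of rational-valued harmonic functions (after casting the
values to `ℚ`); in particular `dim_ℚ ℋ_ℚ^Γ = |∂Γ|`. -/
theorem harmZ_basis_is_harmQ_basis (Γ : Finset (ℤ × ℤ)) (hne : Γ.Nonempty)
    (hconv : IsConvexDomain Γ) {ι : Type} (B : Module.Basis ι ℤ ↥(HarmZ Γ)) :
    (∃ C : Module.Basis ι ℚ ↥(HarmQmod Γ),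
      ∀ (i : ι) (v : ↥Γ), (↑(C i) : ↥Γ → ℚ) v = ((↑(B i) : ↥Γ → ℤ) v : ℚ)) ∧
    Module.finrank ℚ ↥(HarmQmod Γ) = (boundary Γ).card := by
  refine ⟨⟨Module.Basis.mk (li_castHarm Γ B) (span_castHarm Γ B), ?_⟩, finrank_harmQmod Γ⟩
  intro i v
  rw [Module.Basis.mk_apply]
  rfl
end
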